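/- For every n ≥ 1, every binary sequence in B_{3;2}(n) avoids each of the three blocks (011100), (001110), (001111100) as a contiguous sub-block; that is, B_{3;2}(n) ⊆ S_{F(2)}(n). (Lemma 9) -/
import Mathlib


/-- `x` is a ternary sequence: every entry lies in `{-1, 0, 1} ⊆ ℤ`. -/
def IsTernary {n : ℕ} (x : Fin n → ℤ) : Prop :=
  ∀ i, x i = -1 ∨ x i = 0 ∨ x i = 1

/-- A ternary sequence `x` of length `n` (0-indexed positions) satisfies the TGP(t)
constraint. -/
def SatisfiesTGPt (t : ℕ) {n : ℕ} (x : Fin n → ℤ) : Prop :=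
  ∀ k l m : Fin n, x k ≠ 0 → x k = x l → x l = x m →
    max (max |((k : ℕ) : ℤ) - ((l : ℕ) : ℤ)| |((l : ℕ) : ℤ) - ((m : ℕ) : ℤ)|)
        |((m : ℕ) : ℤ) - ((k : ℕ) : ℤ)| ≤ (t : ℤ) →
    ∀ i : Fin n, ((i : ℕ) : ℤ) = ((k : ℕ) : ℤ) + ((l : ℕ) : ℤ) - ((m : ℕ) : ℤ) →
      x i ≠ 0

/-- `B3t t n = ξ(T_{3;t}(n))`: binary sequences of length `n` obtainable as
componentwise absolute values of TGP(t)-constrained ternary sequences. -/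
def B3t (t n : ℕ) : Set (Fin n → Fin 2) :=
  {y | ∃ x : Fin n → ℤ, IsTernary x ∧ SatisfiesTGPt t x ∧
    y = fun i => if x i = 0 then 0 else 1}

/-- `y` contains the pattern `p` as a contiguous sub-block. -/
def HasBlock {n m : ℕ} (y : Fin n → Fin 2) (p : Fin m → Fin 2) : Prop :=
  ∃ i : ℕ, ∃ h : i + m ≤ n,
    ∀ j : Fin m, y ⟨i + j.val, by have := j.isLt; omega⟩ = p j

/-- `SF2 n`: binary sequences of length `n` avoiding all three forbidden blocks
`(011100)`, `(001110)`, `(001111100)` of `F(2)`. -/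
def SF2 (n : ℕ) : Set (Fin n → Fin 2) :=
  {y | ¬ HasBlock y ![0, 1, 1, 1, 0, 0] ∧ ¬ HasBlock y ![0, 0, 1, 1, 1, 0] ∧
       ¬ HasBlock y ![0, 0, 1, 1, 1, 1, 1, 0, 0]}

/-- Extension of a finite sequence to all of `ℕ` by zero. -/
def ext0 {n : ℕ} (x : Fin n → ℤ) (k : ℕ) : ℤ :=
  if h : k < n then x ⟨k, h⟩ else 0

lemma ext0_pos {n : ℕ} (x : Fin n → ℤ) {k : ℕ} (h : k < n) :
    ext0 x k = x ⟨k, h⟩ := dif_pos h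

lemma ext0_tern {n : ℕ} {x : Fin n → ℤ} (hT : IsTernary x) {a : ℕ} (h : a < n) :
    ext0 x a = -1 ∨ ext0 x a = 0 ∨ ext0 x a = 1 := by
  rw [ext0_pos x h]; exact hT _

/-- Key consequence of TGP(2): from two equal-valued support positions at distance
at most 2, the reflected position is also in the support (if in range). -/
lemma ext0_key {n : ℕ} {x : Fin n → ℤ} (hS : SatisfiesTGPt 2 x) (a b c : ℕ)
    (ha : a < n) (hb : b < n) (hc : c < n)
    (hxa : ext0 x a ≠ 0) (hab : ext0 x a = ext0 x b)
    (hd : a ≤ b + 2) (hd' : b ≤ a + 2) (hcb : c + b = a + a) :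
    ext0 x c ≠ 0 := by
  rw [ext0_pos x ha] at hxa
  rw [ext0_pos x ha, ext0_pos x hb] at hab
  rw [ext0_pos x hc]
  refine hS ⟨a, ha⟩ ⟨a, ha⟩ ⟨b, hb⟩ hxa rfl hab ?_ ⟨c, hc⟩ ?_
  · refine max_le (max_le ?_ ?_) ?_
    · simp
    · rw [abs_le]; constructor <;> push_cast <;> omega
    · rw [abs_le]; constructor <;> push_cast <;> omega
  · push_cast; omega

lemma if01_eq_zero {a : ℤ} (h : (if a = 0 then (0 : Fin 2) else 1) = 0) : a = 0 := by
  by_contra hc; rw [if_neg hc] at h; exact absurd h (by decide)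

lemma if01_eq_one {a : ℤ} (h : (if a = 0 then (0 : Fin 2) else 1) = 1) : a ≠ 0 := by
  intro hc; rw [if_pos hc] at h; exact absurd h (by decide)

/-- **Lemma 9.** For every `n ≥ 1`, every binary sequence in `B_{3;2}(n)` avoids
each of the three forbidden blocks of `F(2)`: `B_{3;2}(n) ⊆ S_{F(2)}(n)`. -/
theorem B32_subset_SF2 (n : ℕ) (hn : 1 ≤ n) : B3t 2 n ⊆ SF2 n := by
  rintro y ⟨x, hT, hS, rfl⟩
  refine ⟨?_, ?_, ?_⟩
  · rintro ⟨i, hle, hj⟩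
    have E : ∀ k : ℕ, (hk : k < 6) →
        (if ext0 x (i + k) = 0 then (0 : Fin 2) else 1) = ![0, 1, 1, 1, 0, 0] ⟨k, hk⟩ := by
      intro k hk
      have hlt : i + k < n := by omega
      rw [ext0_pos x hlt]
      exact hj ⟨k, hk⟩
    have e0 : ext0 x (i + 0) = 0 := if01_eq_zero ((E 0 (by norm_num)).trans (by decide))
    have e1 : ext0 x (i + 1) ≠ 0 := if01_eq_one ((E 1 (by norm_num)).trans (by decide))
    have e2 : ext0 x (i + 2) ≠ 0 := if01_eq_one ((E 2 (by norm_num)).trans (by decide))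
    have e3 : ext0 x (i + 3) ≠ 0 := if01_eq_one ((E 3 (by norm_num)).trans (by decide))
    have e4 : ext0 x (i + 4) = 0 := if01_eq_zero ((E 4 (by norm_num)).trans (by decide))
    have e5 : ext0 x (i + 5) = 0 := if01_eq_zero ((E 5 (by norm_num)).trans (by decide))
    have v1 := ext0_tern hT (show i + 1 < n by omega)
    have v2 := ext0_tern hT (show i + 2 < n by omega)
    have v3 := ext0_tern hT (show i + 3 < n by omega)
    have tri : ext0 x (i + 1) = ext0 x (i + 2) ∨ ext0 x (i + 2) = ext0 x (i + 3) ∨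
        ext0 x (i + 1) = ext0 x (i + 3) := by
      rcases v1 with h | h | h <;> rcases v2 with h' | h' | h' <;>
        rcases v3 with h'' | h'' | h'' <;> omega
    rcases tri with h | h | h
    · exact ext0_key hS (i + 1) (i + 2) (i + 0) (by omega) (by omega) (by omega)
        e1 h (by omega) (by omega) (by omega) e0
    · exact ext0_key hS (i + 3) (i + 2) (i + 4) (by omega) (by omega) (by omega)
        e3 h.symm (by omega) (by omega) (by omega) e4
    · exact ext0_key hS (i + 3) (i + 1) (i + 5) (by omega) (by omega) (by omega)
        e3 h.symm (by omega) (by omega) (by omega) e5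
  · rintro ⟨i, hle, hj⟩
    have E : ∀ k : ℕ, (hk : k < 6) →
        (if ext0 x (i + k) = 0 then (0 : Fin 2) else 1) = ![0, 0, 1, 1, 1, 0] ⟨k, hk⟩ := by
      intro k hk
      have hlt : i + k < n := by omega
      rw [ext0_pos x hlt]
      exact hj ⟨k, hk⟩
    have e0 : ext0 x (i + 0) = 0 := if01_eq_zero ((E 0 (by norm_num)).trans (by decide))
    have e1 : ext0 x (i + 1) = 0 := if01_eq_zero ((E 1 (by norm_num)).trans (by decide))
    have e2 : ext0 x (i + 2) ≠ 0 := if01_eq_one ((E 2 (by norm_num)).trans (by decide))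
    have e3 : ext0 x (i + 3) ≠ 0 := if01_eq_one ((E 3 (by norm_num)).trans (by decide))
    have e4 : ext0 x (i + 4) ≠ 0 := if01_eq_one ((E 4 (by norm_num)).trans (by decide))
    have e5 : ext0 x (i + 5) = 0 := if01_eq_zero ((E 5 (by norm_num)).trans (by decide))
    have v2 := ext0_tern hT (show i + 2 < n by omega)
    have v3 := ext0_tern hT (show i + 3 < n by omega)
    have v4 := ext0_tern hT (show i + 4 < n by omega)
    have tri : ext0 x (i + 2) = ext0 x (i + 3) ∨ ext0 x (i + 3) = ext0 x (i + 4) ∨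
        ext0 x (i + 2) = ext0 x (i + 4) := by
      rcases v2 with h | h | h <;> rcases v3 with h' | h' | h' <;>
        rcases v4 with h'' | h'' | h'' <;> omega
    rcases tri with h | h | h
    · exact ext0_key hS (i + 2) (i + 3) (i + 1) (by omega) (by omega) (by omega)
        e2 h (by omega) (by omega) (by omega) e1
    · exact ext0_key hS (i + 4) (i + 3) (i + 5) (by omega) (by omega) (by omega)
        e4 h.symm (by omega) (by omega) (by omega) e5
    · exact ext0_key hS (i + 2) (i + 4) (i + 0) (by omega) (by omega) (by omega)
        e2 h (by omega) (by omega) (by omega) e0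
  · rintro ⟨i, hle, hj⟩
    have E : ∀ k : ℕ, (hk : k < 9) →
        (if ext0 x (i + k) = 0 then (0 : Fin 2) else 1) =
          ![0, 0, 1, 1, 1, 1, 1, 0, 0] ⟨k, hk⟩ := by
      intro k hk
      have hlt : i + k < n := by omega
      rw [ext0_pos x hlt]
      exact hj ⟨k, hk⟩
    have e0 : ext0 x (i + 0) = 0 := if01_eq_zero ((E 0 (by norm_num)).trans (by decide))
    have e1 : ext0 x (i + 1) = 0 := if01_eq_zero ((E 1 (by norm_num)).trans (by decide))
    have e2 : ext0 x (i + 2) ≠ 0 := if01_eq_one ((E 2 (by norm_num)).trans (by decide))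
    have e3 : ext0 x (i + 3) ≠ 0 := if01_eq_one ((E 3 (by norm_num)).trans (by decide))
    have e4 : ext0 x (i + 4) ≠ 0 := if01_eq_one ((E 4 (by norm_num)).trans (by decide))
    have e5 : ext0 x (i + 5) ≠ 0 := if01_eq_one ((E 5 (by norm_num)).trans (by decide))
    have e6 : ext0 x (i + 6) ≠ 0 := if01_eq_one ((E 6 (by norm_num)).trans (by decide))
    have e7 : ext0 x (i + 7) = 0 := if01_eq_zero ((E 7 (by norm_num)).trans (by decide))
    have e8 : ext0 x (i + 8) = 0 := if01_eq_zero ((E 8 (by norm_num)).trans (by decide))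
    have v2 := ext0_tern hT (show i + 2 < n by omega)
    have v3 := ext0_tern hT (show i + 3 < n by omega)
    have v4 := ext0_tern hT (show i + 4 < n by omega)
    have v5 := ext0_tern hT (show i + 5 < n by omega)
    have v6 := ext0_tern hT (show i + 6 < n by omega)
    have h34 : ext0 x (i + 3) = ext0 x (i + 4) := by
      have tri : ext0 x (i + 2) = ext0 x (i + 3) ∨ ext0 x (i + 3) = ext0 x (i + 4) ∨
          ext0 x (i + 2) = ext0 x (i + 4) := by
        rcases v2 with h | h | h <;> rcases v3 with h' | h' | h' <;>
          rcases v4 with h'' | h'' | h'' <;> omega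
      rcases tri with h | h | h
      · exact absurd e1 (ext0_key hS (i + 2) (i + 3) (i + 1)
          (by omega) (by omega) (by omega) e2 h (by omega) (by omega) (by omega))
      · exact h
      · exact absurd e0 (ext0_key hS (i + 2) (i + 4) (i + 0)
          (by omega) (by omega) (by omega) e2 h (by omega) (by omega) (by omega))
    have h45 : ext0 x (i + 4) = ext0 x (i + 5) := by
      have tri : ext0 x (i + 4) = ext0 x (i + 5) ∨ ext0 x (i + 5) = ext0 x (i + 6) ∨
          ext0 x (i + 4) = ext0 x (i + 6) := by
        rcases v4 with h | h | h <;> rcases v5 with h' | h' | h' <;>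
          rcases v6 with h'' | h'' | h'' <;> omega
      rcases tri with h | h | h
      · exact h
      · exact absurd e7 (ext0_key hS (i + 6) (i + 5) (i + 7)
          (by omega) (by omega) (by omega) e6 h.symm (by omega) (by omega) (by omega))
      · exact absurd e8 (ext0_key hS (i + 6) (i + 4) (i + 8)
          (by omega) (by omega) (by omega) e6 h.symm (by omega) (by omega) (by omega))
    exact ext0_key hS (i + 3) (i + 5) (i + 1) (by omega) (by omega) (by omega)
      e3 (h34.trans h45) (by omega) (by omega) (by omega) e1
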